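/- In the group-extension setting below, the substitution Θ̂ : G × 𝒳 → (G × 𝒳)^λ is primitive: there exists k ≥ 1 such that for all (h, M'), (g, M) ∈ G × 𝒳 there is j < λ^k with Θ̂^k(h, M')_j = (g, M). -/

import Mathlib

open Filter Topology

/-- `substIter θ l k a j` is the `j`-th letter of `θ^k(a)`, where `θ : A → A^l` is a
substitution of constant length `l` (the letters of `θ(a)` being `θ a 0, …, θ a (l-1)`).
It is meaningful for `j < l ^ k` and satisfies
`θ^{k+1}(a)_{j'·l + r} = θ(θ^k(a)_{j'})_r`. -/
def substIter {A : Type*} (θ : A → ℕ → A) (l : ℕ) : ℕ → A → ℕ → A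
  | 0, a, _ => a
  | k + 1, a, j => θ (substIter θ l k a (j / l)) (j % l)

/-- A substitution of constant length `l` is primitive if some iterate of every letter
contains every letter. -/
def SubstPrimitive {A : Type*} (θ : A → ℕ → A) (l : ℕ) : Prop :=
  ∃ k, 1 ≤ k ∧ ∀ a b : A, ∃ j, j < l ^ k ∧ substIter θ l k a j = b

/-- Primitivity of a substitution restricted to a sub-alphabet `S`. -/
def SubstPrimitiveOn {A : Type*} (θ : A → ℕ → A) (l : ℕ) (S : Set A) : Prop :=
  ∃ k, 1 ≤ k ∧ ∀ a ∈ S, ∀ b ∈ S, ∃ j, j < l ^ k ∧ substIter θ l k a j = b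

/-- The column number of a substitution of constant length `l`, restricted to the
sub-alphabet `S`: the minimal cardinality of a column set `{θ^k(a)_j : a ∈ S}`. -/
noncomputable def columnNumberOn {A : Type*} (θ : A → ℕ → A) (l : ℕ) (S : Set A) : ℕ :=
  sInf { n : ℕ | ∃ k, 1 ≤ k ∧ ∃ j, j < l ^ k ∧
    ((fun a => substIter θ l k a j) '' S).ncard = n }

/-- The column number `c(θ)` of a substitution of constant length `l`. -/
noncomputable def columnNumber {A : Type*} (θ : A → ℕ → A) (l : ℕ) : ℕ :=
  columnNumberOn θ l Set.univ

/-- The one-sided fixed point `u` of `θ` obtained by iterating `θ` at a letter `a₀`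
with `θ(a₀)_0 = a₀`: `u n = θ^k(a₀)_n` for any `k` with `n < l^k`. -/
def substFixedPoint {A : Type*} (θ : A → ℕ → A) (l : ℕ) (a₀ : A) : ℕ → A :=
  fun n => substIter θ l (n + 1) a₀ n

/-- The height `h(θ)`: the largest `m ≥ 1` coprime to `l` dividing
`gcd {r ≥ 1 : u[r] = u[0]}`, i.e. dividing every return time of `u[0]`. -/
noncomputable def substHeight {A : Type*} (θ : A → ℕ → A) (l : ℕ) (a₀ : A) : ℕ :=
  sSup { m : ℕ | 1 ≤ m ∧ Nat.Coprime m l ∧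
    ∀ r : ℕ, 1 ≤ r → substFixedPoint θ l a₀ r = substFixedPoint θ l a₀ 0 → m ∣ r }

/-- The subshift `X_θ ⊆ A^ℤ`: all `x` each of whose finite blocks occurs in some
`θ^k(a)`. -/
def subshift {A : Type*} (θ : A → ℕ → A) (l : ℕ) : Set (ℤ → A) :=
  { x | ∀ (i : ℤ) (n : ℕ), ∃ k, 1 ≤ k ∧ ∃ a : A, ∃ j : ℕ, j + n ≤ l ^ k ∧
      ∀ m : ℕ, m < n → x (i + (m : ℤ)) = substIter θ l k a (j + m) }

/-- The subshift `X_x ⊆ A^ℤ` generated by a one-sided sequence `x ∈ A^ℕ`: all `z`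
each of whose finite blocks occurs in `x`. -/
def subshiftOf {A : Type*} (x : ℕ → A) : Set (ℤ → A) :=
  { z | ∀ (i : ℤ) (n : ℕ), ∃ j : ℕ, ∀ m : ℕ, m < n → z (i + (m : ℤ)) = x (j + m) }

/-- The left shift on `A^ℤ`. -/
def shift {A : Type*} (x : ℤ → A) : ℤ → A := fun n => x (n + 1)

/-- A bounded arithmetic function. -/
def BoundedSeq (u : ℕ → ℂ) : Prop := ∃ C : ℝ, ∀ n, ‖u n‖ ≤ C

/-- A multiplicative arithmetic function: `u(mn) = u(m)u(n)` for coprime `m, n`. -/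
def MultiplicativeSeq (u : ℕ → ℂ) : Prop :=
  ∀ m n : ℕ, Nat.Coprime m n → u (m * n) = u m * u n

/-- An aperiodic arithmetic function: zero mean along every arithmetic progression. -/
def AperiodicSeq (u : ℕ → ℂ) : Prop :=
  ∀ a b : ℕ, 1 ≤ a →
    Tendsto (fun N : ℕ => (N : ℂ)⁻¹ * ∑ n ∈ Finset.Icc 1 N, u (a * n + b)) atTop (nhds 0)

/-- The Weyl pseudo-metric
`d_W(x,y) = limsup_N sup_{ℓ ≥ 1} (1/N)·#{ℓ ≤ n < ℓ+N : x n ≠ y n}`. -/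
noncomputable def weylDist {B : Type*} (x y : ℕ → B) : ℝ :=
  limsup (fun N : ℕ =>
    ⨆ ℓ : ℕ, ⨆ _ : 1 ≤ ℓ,
      (({ n : ℕ | ℓ ≤ n ∧ n < ℓ + N ∧ x n ≠ y n }.ncard : ℝ) / N)) atTop

/-- A periodic sequence. -/
def IsPeriodicSeq {B : Type*} (v : ℕ → B) : Prop :=
  ∃ p, 1 ≤ p ∧ ∀ n, v (n + p) = v n

/-- Weyl rational almost periodicity: a `d_W`-limit of periodic sequences. -/
def WRAPSeq {B : Type*} (x : ℕ → B) : Prop :=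
  ∀ ε : ℝ, 0 < ε → ∃ v : ℕ → B, IsPeriodicSeq v ∧ weylDist x v < ε

/-- The family `𝒳(θ)` of column sets realizing the column number of `θ`. -/
noncomputable def columnSets {A : Type*} (θ : A → ℕ → A) (l : ℕ) : Set (Set A) :=
  { M | (∃ k, 1 ≤ k ∧ ∃ j, j < l ^ k ∧ M = (fun a => substIter θ l k a j) '' Set.univ) ∧
        M.ncard = columnNumber θ l }

/-- The synchronizing part `~θ` of `θ`, as a substitution on subsets of the alphabet:
`~θ(M)_j = {θ(a)_j : a ∈ M}`. -/
def synchPart {A : Type*} (θ : A → ℕ → A) : Set A → ℕ → Set A :=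
  fun M j => (fun a => θ a j) '' M

/-- The joining `θ ∨ ζ` of two substitutions of the same constant length. -/
def joinSub {A B : Type*} (θ : A → ℕ → A) (ζ : B → ℕ → B) : A × B → ℕ → A × B :=
  fun p j => (θ p.1 j, ζ p.2 j)

/-- The pure base `θ^{(h)}` of `θ`: a substitution of length `l` on blocks of length `h`,
`θ^{(h)}(w)_j = θ(w)[jh, (j+1)h−1]`, where `θ(w)` is the concatenation
`θ(w_0)…θ(w_{h-1})`. -/
def pureBase {A : Type*} (θ : A → ℕ → A) (l h : ℕ) : (Fin h → A) → ℕ → (Fin h → A) :=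
  fun w j i => θ (w ⟨(j * h + i.val) / l % h, Nat.mod_lt _ i.pos⟩) ((j * h + i.val) % l)

/-- Iterated cocycle `σ^{(k)}`, with `σ^{(1)} = σ` and
`σ^{(k+1)}(M, j₁·l + j₂) = σ^{(k)}(M, j₁) ∘ σ(~θ^k(M)_{j₁}, j₂)`. -/
def sigmaIter {X : Type*} {c : ℕ} (tilde : X → ℕ → X)
    (σ : X → ℕ → Equiv.Perm (Fin c)) (l : ℕ) : ℕ → X → ℕ → Equiv.Perm (Fin c)
  | 0, _, _ => 1
  | k + 1, M, j =>
      sigmaIter tilde σ l k M (j / l) * σ (substIter tilde l k M (j / l)) (j % l)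

/-- The group extension substitution `Θ̂(g, M)_j = (g ∘ σ(M,j), ~θ(M)_j)`. -/
def hatTheta {X : Type*} {c : ℕ} (tilde : X → ℕ → X)
    (σ : X → ℕ → Equiv.Perm (Fin c)) : Equiv.Perm (Fin c) × X → ℕ → Equiv.Perm (Fin c) × X :=
  fun p j => (p.1 * σ p.2 j, tilde p.2 j)

/-- The group `G` generated by the cocycle values `σ(M, j)`, `M ∈ 𝒳`, `j < l`. -/
def cocycleGroup {X : Type*} {c : ℕ} (σ : X → ℕ → Equiv.Perm (Fin c)) (l : ℕ) :
    Subgroup (Equiv.Perm (Fin c)) :=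
  Subgroup.closure { g | ∃ M : X, ∃ j, j < l ∧ g = σ M j }


section Helpers

private lemma substIter_add' {A : Type*} (θ : A → ℕ → A) {l : ℕ} (hl : 0 < l)
    (k₁ : ℕ) {k₂ : ℕ} (a : A) (j₁ : ℕ) {j₂ : ℕ} (h₂ : j₂ < l ^ k₂) :
    substIter θ l (k₁ + k₂) a (j₁ * l ^ k₂ + j₂) =
      substIter θ l k₂ (substIter θ l k₁ a j₁) j₂ := by
  induction k₂ generalizing j₂ with
  | zero =>
      have : j₂ = 0 := by simpa using h₂
      subst this; simp [substIter]
  | succ k ih =>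
      have hre : j₁ * l ^ (k + 1) + j₂ = l * (j₁ * l ^ k) + j₂ := by ring
      have hdiv : (j₁ * l ^ (k + 1) + j₂) / l = j₁ * l ^ k + j₂ / l := by
        rw [hre, Nat.mul_add_div hl]
      have hmod : (j₁ * l ^ (k + 1) + j₂) % l = j₂ % l := by
        rw [hre, Nat.mul_add_mod]
      have hb : j₂ / l < l ^ k := by
        rw [Nat.div_lt_iff_lt_mul hl]; simpa [pow_succ] using h₂
      show θ (substIter θ l (k₁ + k) a ((j₁ * l ^ (k + 1) + j₂) / l))
          ((j₁ * l ^ (k + 1) + j₂) % l) = _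
      rw [hdiv, hmod, ih hb]
      rfl

private lemma sigmaIter_add' {X : Type*} {c : ℕ} (tilde : X → ℕ → X)
    (σ : X → ℕ → Equiv.Perm (Fin c)) {l : ℕ} (hl : 0 < l)
    (k₁ : ℕ) {k₂ : ℕ} (M : X) (j₁ : ℕ) {j₂ : ℕ} (h₂ : j₂ < l ^ k₂) :
    sigmaIter tilde σ l (k₁ + k₂) M (j₁ * l ^ k₂ + j₂) =
      sigmaIter tilde σ l k₁ M j₁ *
        sigmaIter tilde σ l k₂ (substIter tilde l k₁ M j₁) j₂ := by
  induction k₂ generalizing j₂ with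
  | zero =>
      have : j₂ = 0 := by simpa using h₂
      subst this; simp [sigmaIter]
  | succ k ih =>
      have hre : j₁ * l ^ (k + 1) + j₂ = l * (j₁ * l ^ k) + j₂ := by ring
      have hdiv : (j₁ * l ^ (k + 1) + j₂) / l = j₁ * l ^ k + j₂ / l := by
        rw [hre, Nat.mul_add_div hl]
      have hmod : (j₁ * l ^ (k + 1) + j₂) % l = j₂ % l := by
        rw [hre, Nat.mul_add_mod]
      have hb : j₂ / l < l ^ k := by
        rw [Nat.div_lt_iff_lt_mul hl]; simpa [pow_succ] using h₂
      show sigmaIter tilde σ l (k₁ + k) M ((j₁ * l ^ (k + 1) + j₂) / l) *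
          σ (substIter tilde l (k₁ + k) M ((j₁ * l ^ (k + 1) + j₂) / l))
            ((j₁ * l ^ (k + 1) + j₂) % l) = _
      rw [hdiv, hmod, ih hb, substIter_add' tilde hl k₁ M j₁ hb, mul_assoc]
      rfl

private lemma hatTheta_iter {X : Type*} {c : ℕ} (tilde : X → ℕ → X)
    (σ : X → ℕ → Equiv.Perm (Fin c)) (l k : ℕ)
    (h : Equiv.Perm (Fin c)) (M : X) (j : ℕ) :
    substIter (hatTheta tilde σ) l k (h, M) j =
      (h * sigmaIter tilde σ l k M j, substIter tilde l k M j) := by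
  induction k generalizing j with
  | zero => simp [substIter, sigmaIter]
  | succ k ih => simp [substIter, sigmaIter, ih, hatTheta, mul_assoc]

private lemma sigmaIter_mem {X : Type*} {c : ℕ} (tilde : X → ℕ → X)
    (σ : X → ℕ → Equiv.Perm (Fin c)) {l : ℕ} (hl : 0 < l) (k : ℕ) (M : X) (j : ℕ) :
    sigmaIter tilde σ l k M j ∈ cocycleGroup σ l := by
  induction k generalizing M j with
  | zero => exact one_mem _
  | succ k ih =>
      exact mul_mem (ih M (j / l))
        (Subgroup.subset_closure ⟨_, j % l, Nat.mod_lt _ hl, rfl⟩)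

private lemma fixed_zero {X : Type*} {c : ℕ} (tilde : X → ℕ → X)
    (σ : X → ℕ → Equiv.Perm (Fin c)) (l : ℕ) (M₀ : X)
    (H2a : tilde M₀ 0 = M₀) (H2b : σ M₀ 0 = 1) (t : ℕ) :
    substIter tilde l t M₀ 0 = M₀ ∧ sigmaIter tilde σ l t M₀ 0 = 1 := by
  induction t with
  | zero => exact ⟨rfl, rfl⟩
  | succ t ih =>
      refine ⟨?_, ?_⟩
      · show tilde (substIter tilde l t M₀ (0 / l)) (0 % l) = M₀
        simp [ih.1, H2a]
      · show sigmaIter tilde σ l t M₀ (0 / l) *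
            σ (substIter tilde l t M₀ (0 / l)) (0 % l) = 1
        simp [ih.1, ih.2, H2b]

private lemma idx_bound {l k₁ k₂ j₁ j₂ : ℕ} (h₁ : j₁ < l ^ k₁) (h₂ : j₂ < l ^ k₂) :
    j₁ * l ^ k₂ + j₂ < l ^ (k₁ + k₂) := by
  calc j₁ * l ^ k₂ + j₂ < (j₁ + 1) * l ^ k₂ := by nlinarith
    _ ≤ l ^ k₁ * l ^ k₂ := Nat.mul_le_mul_right _ h₁
    _ = l ^ (k₁ + k₂) := (pow_add l k₁ k₂).symm

end Helpers

/-- In the group-extension setting, the substitution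
`Θ̂ : G × 𝒳 → (G × 𝒳)^λ` is primitive. -/
theorem hatTheta_primitive
    {X : Type*} [Finite X] (l c : ℕ) (hl : 2 ≤ l) (hc : 1 ≤ c)
    (tilde : X → ℕ → X) (hprim : SubstPrimitive tilde l)
    (σ : X → ℕ → Equiv.Perm (Fin c)) (M₀ : X)
    (H1 : ∃ k₀, 1 ≤ k₀ ∧ ∃ j₀, j₀ < l ^ k₀ ∧ ∀ M : X,
      substIter tilde l k₀ M j₀ = M₀ ∧ sigmaIter tilde σ l k₀ M j₀ = 1)
    (H2a : tilde M₀ 0 = M₀) (H2b : σ M₀ 0 = 1) :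
    SubstPrimitiveOn (hatTheta tilde σ) l
      { p : Equiv.Perm (Fin c) × X | p.1 ∈ cocycleGroup σ l } := by
  classical
  obtain ⟨k₀, hk₀, j₀, hj₀, hH1⟩ := H1
  obtain ⟨kp, hkp, hp⟩ := hprim
  have hl0 : 0 < l := by omega
  -- the set of permutations realized as cocycle values along a return path from M₀ to M₀
  set S : Set (Equiv.Perm (Fin c)) :=
    { g | ∃ k j, j < l ^ k ∧ substIter tilde l k M₀ j = M₀ ∧
        sigmaIter tilde σ l k M₀ j = g } with hS
  have hone : (1 : Equiv.Perm (Fin c)) ∈ S := ⟨0, 0, by simp, rfl, rfl⟩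
  have hmul : ∀ a ∈ S, ∀ b ∈ S, a * b ∈ S := by
    rintro a ⟨k₁, j₁, hb₁, hs₁, hg₁⟩ b ⟨k₂, j₂, hb₂, hs₂, hg₂⟩
    refine ⟨k₁ + k₂, j₁ * l ^ k₂ + j₂, idx_bound hb₁ hb₂, ?_, ?_⟩
    · rw [substIter_add' tilde hl0 k₁ M₀ j₁ hb₂, hs₁, hs₂]
    · rw [sigmaIter_add' tilde σ hl0 k₁ M₀ j₁ hb₂, hs₁, hg₁, hg₂]
  have hpow : ∀ a ∈ S, ∀ n : ℕ, a ^ n ∈ S := by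
    intro a ha n
    induction n with
    | zero => simpa using hone
    | succ n ih => rw [pow_succ]; exact hmul _ ih _ ha
  have hinv : ∀ a ∈ S, a⁻¹ ∈ S := by
    intro a ha
    have hord : 0 < orderOf a := orderOf_pos a
    have h1 : a * a ^ (orderOf a - 1) = 1 := by
      rw [← pow_succ', show orderOf a - 1 + 1 = orderOf a from by omega]
      exact pow_orderOf_eq_one a
    have : a ^ (orderOf a - 1) = a⁻¹ := eq_inv_of_mul_eq_one_right h1
    rw [← this]; exact hpow a ha _
  -- every generator of the cocycle group lies in S
  have hgen : ∀ g ∈ { g | ∃ M : X, ∃ j, j < l ∧ g = σ M j }, g ∈ S := by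
    rintro g ⟨M, j', hj', rfl⟩
    obtain ⟨jp, hjp, hsubp⟩ := hp M₀ M
    set p := sigmaIter tilde σ l kp M₀ jp with hpdef
    have hpmem : p ∈ S := by
      refine ⟨kp + k₀, jp * l ^ k₀ + j₀, idx_bound hjp hj₀, ?_, ?_⟩
      · rw [substIter_add' tilde hl0 kp M₀ jp hj₀, hsubp]; exact (hH1 M).1
      · rw [sigmaIter_add' tilde σ hl0 kp M₀ jp hj₀, hsubp, (hH1 M).2, mul_one]
    have hj'lt : j' < l ^ 1 := by simpa using hj'
    have hinner : j' * l ^ k₀ + j₀ < l ^ (1 + k₀) := idx_bound hj'lt hj₀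
    have hstep1 : substIter tilde l 1 M j' = tilde M j' := by
      simp [substIter, Nat.mod_eq_of_lt hj']
    have hstep1' : sigmaIter tilde σ l 1 M j' = σ M j' := by
      simp [sigmaIter, substIter, Nat.mod_eq_of_lt hj']
    have hpamem : p * σ M j' ∈ S := by
      refine ⟨kp + (1 + k₀), jp * l ^ (1 + k₀) + (j' * l ^ k₀ + j₀),
        idx_bound hjp hinner, ?_, ?_⟩
      · rw [substIter_add' tilde hl0 kp M₀ jp hinner, hsubp,
          substIter_add' tilde hl0 1 M j' hj₀, hstep1]
        exact (hH1 _).1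
      · rw [sigmaIter_add' tilde σ hl0 kp M₀ jp hinner, hsubp,
          sigmaIter_add' tilde σ hl0 1 M j' hj₀, hstep1, hstep1',
          (hH1 _).2, mul_one]
    have := hmul _ (hinv p hpmem) _ hpamem
    rwa [inv_mul_cancel_left] at this
  -- every element of the cocycle group lies in S
  have key : ∀ g ∈ cocycleGroup σ l, g ∈ S := by
    intro g hg
    exact Subgroup.closure_induction (fun x hx => hgen x hx) hone
      (fun x y _ _ hx hy => hmul x hx y hy) (fun x _ hx => hinv x hx) hg
  -- uniformize the realization length
  choose! kf jf hjf hsub hsig using key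
  set N : ℕ := Finset.univ.sup kf with hN
  have uniform : ∀ g ∈ cocycleGroup σ l, ∃ j, j < l ^ N ∧
      substIter tilde l N M₀ j = M₀ ∧ sigmaIter tilde σ l N M₀ j = g := by
    intro g hg
    have hle : kf g ≤ N := Finset.le_sup (Finset.mem_univ g)
    set t := N - kf g with ht
    have hNt : kf g + t = N := by omega
    have h0t : (0 : ℕ) < l ^ t := Nat.pow_pos hl0
    refine ⟨jf g * l ^ t, ?_, ?_, ?_⟩
    · have := idx_bound (l := l) (hjf g hg) h0t
      simpa [hNt] using this
    · have := substIter_add' tilde hl0 (kf g) (k₂ := t) M₀ (jf g) h0t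
      rw [hNt, add_zero] at this
      rw [this, hsub g hg]
      exact (fixed_zero tilde σ l M₀ H2a H2b t).1
    · have := sigmaIter_add' tilde σ hl0 (kf g) (k₂ := t) M₀ (jf g) h0t
      rw [hNt, add_zero] at this
      rw [this, hsub g hg, (fixed_zero tilde σ l M₀ H2a H2b t).2, mul_one,
        hsig g hg]
  -- choose connecting indices from M₀ to each letter
  choose jM hjMlt hjMsub using fun M => hp M₀ M
  -- assemble
  refine ⟨k₀ + (N + kp), by omega, ?_⟩
  rintro ⟨h, M'⟩ hmem ⟨g, M⟩ hmem'
  have hhG : h ∈ cocycleGroup σ l := hmem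
  have hgG : g ∈ cocycleGroup σ l := hmem'
  set q := sigmaIter tilde σ l kp M₀ (jM M) with hq
  have hqG : q ∈ cocycleGroup σ l := sigmaIter_mem tilde σ hl0 kp M₀ (jM M)
  have heG : h⁻¹ * g * q⁻¹ ∈ cocycleGroup σ l :=
    mul_mem (mul_mem (inv_mem hhG) hgG) (inv_mem hqG)
  obtain ⟨je, hje, hesub, hesig⟩ := uniform _ heG
  have hinner : je * l ^ kp + jM M < l ^ (N + kp) := idx_bound hje (hjMlt M)
  refine ⟨j₀ * l ^ (N + kp) + (je * l ^ kp + jM M), idx_bound hj₀ hinner, ?_⟩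
  rw [hatTheta_iter]
  have hsubeq : substIter tilde l (k₀ + (N + kp)) M'
      (j₀ * l ^ (N + kp) + (je * l ^ kp + jM M)) = M := by
    rw [substIter_add' tilde hl0 k₀ M' j₀ hinner, (hH1 M').1,
      substIter_add' tilde hl0 N M₀ je (hjMlt M), hesub, hjMsub]
  have hsigeq : sigmaIter tilde σ l (k₀ + (N + kp)) M'
      (j₀ * l ^ (N + kp) + (je * l ^ kp + jM M)) = (h⁻¹ * g * q⁻¹) * q := by
    rw [sigmaIter_add' tilde σ hl0 k₀ M' j₀ hinner, (hH1 M').1, (hH1 M').2,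
      one_mul, sigmaIter_add' tilde σ hl0 N M₀ je (hjMlt M), hesub, hesig, hq]
  rw [hsubeq, hsigeq]
  simp [mul_assoc]
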